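/- Let C be a ℤ_p-chain complex. (a) If j is odd and ψ ∈ C^j, χ ∈ C^{j+1} satisfy δψ = sχ, then sχ is a cocycle of the d-cochain complex C*_d and p·[sχ]_d = 0 in H^{j+1}_d(C); indeed p·sχ = δ(sψ) with sψ ∈ ker(d). (b) If j is even and ψ ∈ C^j, χ ∈ C^{j+1} satisfy δψ = dχ, then dχ is a cocycle of the s-cochain complex C*_s and p·[dχ]_s = 0 in H^{j+1}_s(C); indeed p·dχ = δ((p−s)ψ) with (p−s)ψ ∈ ker(s). (This expresses that all Smith classes in positive dimensions are p-torsion.) -/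

import Mathlib

/-- A `ℤ_p`-chain complex: a chain complex of abelian groups in nonnegative degrees
together with a chain automorphism `t` with `t^p = id`. -/
structure ZpComplex (p : ℕ) where
  C : ℕ → Type
  [acg : ∀ n, AddCommGroup (C n)]
  bd : ∀ n, C (n + 1) →+ C n
  bd_bd : ∀ n x, bd n (bd (n + 1) x) = 0
  t : ∀ n, C n →+ C n
  t_bd : ∀ n x, t n (bd n x) = bd n (t (n + 1) x)
  t_pow : ∀ n x, (⇑(t n))^[p] x = x

attribute [instance] ZpComplex.acg

namespace ZpComplex

variable {p : ℕ} (X : ZpComplex p)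

/-- degree-`n` integral cochains: `C^n = Hom(C_n, ℤ)` -/
abbrev Co (n : ℕ) := X.C n →+ ℤ

/-- the chain map `t^k` -/
def tpow (n : ℕ) : ℕ → (X.C n →+ X.C n)
  | 0 => AddMonoidHom.id _
  | k + 1 => (X.t n).comp (tpow n k)

/-- `s = 1 + t + ⋯ + t^{p−1}` on chains -/
def sCh (n : ℕ) : X.C n →+ X.C n := ∑ k ∈ Finset.range p, X.tpow n k

/-- `d = 1 − t` on chains -/
def dCh (n : ℕ) : X.C n →+ X.C n := AddMonoidHom.id _ - X.t n

/-- the coboundary `δφ = φ ∘ ∂` -/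
def cb (n : ℕ) : X.Co n →+ X.Co (n + 1) where
  toFun φ := φ.comp (X.bd n)
  map_zero' := by ext x; simp
  map_add' _ _ := by ext x; simp

/-- `s = 1 + t + ⋯ + t^{p−1}` on cochains (`φ ↦ φ ∘ s`) -/
def sCo (n : ℕ) : X.Co n →+ X.Co n where
  toFun φ := φ.comp (X.sCh n)
  map_zero' := by ext x; simp
  map_add' _ _ := by ext x; simp

/-- `d = 1 − t` on cochains (`φ ↦ φ ∘ d`) -/
def dCo (n : ℕ) : X.Co n →+ X.Co n where
  toFun φ := φ.comp (X.dCh n)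
  map_zero' := by ext x; simp
  map_add' _ _ := by ext x; simp

/-- cocycles of the `d`-cochain complex `C*_d = ker d ⊆ C*` -/
def dcocycles (n : ℕ) : AddSubgroup (X.Co n) := (X.dCo n).ker ⊓ (X.cb n).ker

/-- coboundaries of the `d`-cochain complex -/
def dcobds : ∀ n : ℕ, AddSubgroup (X.Co n)
  | 0 => ⊥
  | (j + 1) => AddSubgroup.map (X.cb j) ((X.dCo j).ker)

/-- the `d`-cohomology `H^n_d` -/
abbrev Hd (n : ℕ) := X.dcocycles n ⧸ (X.dcobds n).addSubgroupOf (X.dcocycles n)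

def clsd (n : ℕ) (φ : X.Co n) (h : φ ∈ X.dcocycles n) : X.Hd n :=
  QuotientAddGroup.mk ⟨φ, h⟩

/-- cocycles of the `s`-cochain complex `C*_s = ker s ⊆ C*` -/
def scocycles (n : ℕ) : AddSubgroup (X.Co n) := (X.sCo n).ker ⊓ (X.cb n).ker

/-- coboundaries of the `s`-cochain complex -/
def scobds : ∀ n : ℕ, AddSubgroup (X.Co n)
  | 0 => ⊥
  | (j + 1) => AddSubgroup.map (X.cb j) ((X.sCo j).ker)

/-- the `s`-cohomology `H^n_s` -/
abbrev Hs (n : ℕ) := X.scocycles n ⧸ (X.scobds n).addSubgroupOf (X.scocycles n)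

def clss (n : ℕ) (φ : X.Co n) (h : φ ∈ X.scocycles n) : X.Hs n :=
  QuotientAddGroup.mk ⟨φ, h⟩

end ZpComplex

open ZpComplex

namespace ZpComplex

variable {p : ℕ} (X : ZpComplex p)

lemma tpow_apply (n k : ℕ) (x : X.C n) : X.tpow n k x = (⇑(X.t n))^[k] x := by
  induction k with
  | zero => rfl
  | succ k ih => simp [tpow, ih, Function.iterate_succ_apply']

lemma tpow_p (n : ℕ) (x : X.C n) : X.tpow n p x = x := by
  rw [tpow_apply, X.t_pow]

lemma t_tpow (n k : ℕ) (x : X.C n) : X.t n (X.tpow n k x) = X.tpow n (k + 1) x := rfl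

lemma tpow_t (n k : ℕ) (x : X.C n) : X.tpow n k (X.t n x) = X.tpow n (k + 1) x := by
  induction k with
  | zero => rfl
  | succ k ih => simp only [tpow, AddMonoidHom.comp_apply] at ih ⊢; rw [ih]

lemma tpow_bd (n k : ℕ) (x : X.C (n + 1)) :
    X.tpow n k (X.bd n x) = X.bd n (X.tpow (n + 1) k x) := by
  induction k with
  | zero => rfl
  | succ k ih =>
      simp only [tpow, AddMonoidHom.comp_apply]
      rw [ih, X.t_bd]

lemma sCh_apply (n : ℕ) (x : X.C n) :
    X.sCh n x = ∑ k ∈ Finset.range p, X.tpow n k x := by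
  simp [sCh]

lemma sCh_bd (n : ℕ) (x : X.C (n + 1)) :
    X.sCh n (X.bd n x) = X.bd n (X.sCh (n + 1) x) := by
  simp [sCh_apply, tpow_bd, map_sum]

lemma sCh_dCh (n : ℕ) (x : X.C n) : X.sCh n (X.dCh n x) = 0 := by
  simp only [dCh, AddMonoidHom.sub_apply, AddMonoidHom.id_apply, map_sub, sCh_apply]
  rw [← Finset.sum_sub_distrib]
  have : ∀ k ∈ Finset.range p, X.tpow n k x - X.tpow n k (X.t n x)
      = X.tpow n k x - X.tpow n (k + 1) x := by
    intro k _; rw [tpow_t]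
  rw [Finset.sum_congr rfl this, Finset.sum_range_sub' (fun k => X.tpow n k x), tpow_p]
  simp [tpow]

lemma t_sCh (n : ℕ) (x : X.C n) : X.t n (X.sCh n x) = X.sCh n x := by
  have h : X.t n (X.sCh n x) - X.sCh n x = 0 := by
    simp only [sCh_apply, map_sum, t_tpow]
    rw [← Finset.sum_sub_distrib, Finset.sum_range_sub (fun k => X.tpow n k x), tpow_p]
    simp [tpow]
  exact sub_eq_zero.mp h

lemma tpow_sCh (n k : ℕ) (x : X.C n) : X.tpow n k (X.sCh n x) = X.sCh n x := by
  induction k with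
  | zero => rfl
  | succ k ih => simp only [tpow, AddMonoidHom.comp_apply, ih, t_sCh]

lemma dCh_sCh (n : ℕ) (x : X.C n) : X.dCh n (X.sCh n x) = 0 := by
  simp [dCh, t_sCh]

lemma sCh_sCh (n : ℕ) (x : X.C n) : X.sCh n (X.sCh n x) = p • X.sCh n x := by
  rw [sCh_apply]
  simp [tpow_sCh]

-- cochain level

lemma sCo_apply (n : ℕ) (φ : X.Co n) (x : X.C n) : X.sCo n φ x = φ (X.sCh n x) := rfl
lemma dCo_apply (n : ℕ) (φ : X.Co n) (x : X.C n) : X.dCo n φ x = φ (X.dCh n x) := rfl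
lemma cb_apply (n : ℕ) (φ : X.Co n) (x : X.C (n + 1)) : X.cb n φ x = φ (X.bd n x) := rfl

lemma dCo_sCo (n : ℕ) (φ : X.Co n) : X.dCo n (X.sCo n φ) = 0 := by
  ext x
  rw [dCo_apply, sCo_apply, sCh_dCh, map_zero]; rfl

lemma sCo_dCo (n : ℕ) (φ : X.Co n) : X.sCo n (X.dCo n φ) = 0 := by
  ext x
  rw [sCo_apply, dCo_apply, dCh_sCh, map_zero]; rfl

lemma cb_sCo (n : ℕ) (φ : X.Co n) :
    X.cb n (X.sCo n φ) = X.sCo (n + 1) (X.cb n φ) := by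
  ext x
  rw [cb_apply, sCo_apply, sCo_apply, cb_apply, sCh_bd]

lemma sCo_sCo (n : ℕ) (φ : X.Co n) : X.sCo n (X.sCo n φ) = p • X.sCo n φ := by
  ext x
  rw [sCo_apply, sCo_apply, sCh_sCh, map_nsmul]
  rfl

lemma cb_cb (n : ℕ) (φ : X.Co n) : X.cb (n + 1) (X.cb n φ) = 0 := by
  ext x
  rw [cb_apply, cb_apply, X.bd_bd, map_zero]; rfl

end ZpComplex

/-- **Smith classes in positive dimensions are `p`-torsion.**
Let `C` be a `ℤ_p`-chain complex.
(a) If `j` is odd and `ψ ∈ C^j`, `χ ∈ C^{j+1}` satisfy `δψ = sχ`, then `sχ` is a cocycle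
of the `d`-cochain complex `C*_d` and `p·[sχ]_d = 0` in `H^{j+1}_d(C)`; indeed
`p·sχ = δ(sψ)` with `sψ ∈ ker d`.
(b) If `j` is even and `ψ ∈ C^j`, `χ ∈ C^{j+1}` satisfy `δψ = dχ`, then `dχ` is a
cocycle of the `s`-cochain complex `C*_s` and `p·[dχ]_s = 0` in `H^{j+1}_s(C)`; indeed
`p·dχ = δ((p−s)ψ)` with `(p−s)ψ ∈ ker s`. -/
theorem smith_classes_are_p_torsion
    (p : ℕ) (hp : p.Prime) (X : ZpComplex p) :
    (∀ j : ℕ, Odd j → ∀ (ψ : X.Co j) (χ : X.Co (j + 1)),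
      X.cb j ψ = X.sCo (j + 1) χ →
        (X.sCo (j + 1) χ ∈ X.dcocycles (j + 1)) ∧
        (∀ hm : X.sCo (j + 1) χ ∈ X.dcocycles (j + 1),
          p • X.clsd (j + 1) (X.sCo (j + 1) χ) hm = 0) ∧
        p • X.sCo (j + 1) χ = X.cb j (X.sCo j ψ) ∧
        X.sCo j ψ ∈ (X.dCo j).ker)
    ∧
    (∀ j : ℕ, Even j → ∀ (ψ : X.Co j) (χ : X.Co (j + 1)),
      X.cb j ψ = X.dCo (j + 1) χ →
        (X.dCo (j + 1) χ ∈ X.scocycles (j + 1)) ∧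
        (∀ hm : X.dCo (j + 1) χ ∈ X.scocycles (j + 1),
          p • X.clss (j + 1) (X.dCo (j + 1) χ) hm = 0) ∧
        p • X.dCo (j + 1) χ = X.cb j (p • ψ - X.sCo j ψ) ∧
        (p • ψ - X.sCo j ψ) ∈ (X.sCo j).ker) := by
  constructor
  · intro j _ ψ χ h
    have hcocycle : X.sCo (j + 1) χ ∈ X.dcocycles (j + 1) := by
      constructor
      · exact X.dCo_sCo (j + 1) χ
      · show X.cb (j + 1) (X.sCo (j + 1) χ) = 0
        rw [← h, X.cb_cb]
    have hker : X.sCo j ψ ∈ (X.dCo j).ker := X.dCo_sCo j ψ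
    have hbd : p • X.sCo (j + 1) χ = X.cb j (X.sCo j ψ) := by
      rw [X.cb_sCo, h, X.sCo_sCo]
    refine ⟨hcocycle, ?_, hbd, hker⟩
    intro hm
    show (p • (⟨X.sCo (j + 1) χ, hm⟩ : X.dcocycles (j + 1)) :
        X.dcocycles (j + 1) ⧸ (X.dcobds (j + 1)).addSubgroupOf (X.dcocycles (j + 1))) = 0
    rw [← QuotientAddGroup.mk_nsmul]
    rw [QuotientAddGroup.eq_zero_iff]
    rw [AddSubgroup.mem_addSubgroupOf]
    show p • X.sCo (j + 1) χ ∈ X.dcobds (j + 1)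
    exact ⟨X.sCo j ψ, hker, hbd.symm⟩
  · intro j _ ψ χ h
    have hcocycle : X.dCo (j + 1) χ ∈ X.scocycles (j + 1) := by
      constructor
      · exact X.sCo_dCo (j + 1) χ
      · show X.cb (j + 1) (X.dCo (j + 1) χ) = 0
        rw [← h, X.cb_cb]
    have hker : (p • ψ - X.sCo j ψ) ∈ (X.sCo j).ker := by
      show X.sCo j (p • ψ - X.sCo j ψ) = 0
      rw [map_sub, map_nsmul, X.sCo_sCo, sub_self]
    have hbd : p • X.dCo (j + 1) χ = X.cb j (p • ψ - X.sCo j ψ) := by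
      have h2 : X.cb j (X.sCo j ψ) = 0 := by
        rw [X.cb_sCo, h, X.sCo_dCo]
      rw [map_sub, map_nsmul, h, h2, sub_zero]
    refine ⟨hcocycle, ?_, hbd, hker⟩
    intro hm
    show (p • (⟨X.dCo (j + 1) χ, hm⟩ : X.scocycles (j + 1)) :
        X.scocycles (j + 1) ⧸ (X.scobds (j + 1)).addSubgroupOf (X.scocycles (j + 1))) = 0
    rw [← QuotientAddGroup.mk_nsmul]
    rw [QuotientAddGroup.eq_zero_iff]
    rw [AddSubgroup.mem_addSubgroupOf]
    show p • X.dCo (j + 1) χ ∈ X.scobds (j + 1)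
    exact ⟨p • ψ - X.sCo j ψ, hker, hbd.symm⟩
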